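/- arXiv:2512.15570 — 3 statements merged into one kernel-verified Lean document; each statement's English description precedes it below -/
import Mathlib

section
/- Let L(T,B) = (1−α)∑_{i,l} d_A(v_i,b_l)^q T_{il} + α∑_{i,j,l,m}|R¹_{ij} − R²_{lm}|^q T_{il}T_{jm} be the semi-relaxed Fused Gromov–Wasserstein loss, where α ∈ [0,1], q ≥ 1. Let (T,B) be given, let T̃ be any other transport plan with the same row-marginal constraint and total mass 1, and let B̃ = (b̃_1,…,b̃_k) be chosen so that L(T̃,B̃) ≤ L(T̃,B). Set D_A = max_{i,l} d_A(v_i,b_l) and D_S = max_{i,j,l,m}|R¹_{ij} − R²_{lm}|. Then L(T̃,B̃) − L(T,B) ≤ ((1−α)D_A^q + 2αD_S^q)·∑_{i,l}|T_{il} − T̃_{il}|. -/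
open Finset

/-- The semi-relaxed Fused Gromov–Wasserstein loss. -/
noncomputable def srFGWloss {n k : ℕ} {X : Type*} [MetricSpace X]
    (α q : ℝ) (v : Fin n → X)
    (R1 : Fin n → Fin n → ℝ) (R2 : Fin k → Fin k → ℝ)
    (T : Fin n → Fin k → ℝ) (B : Fin k → X) : ℝ :=
  (1 - α) * ∑ i, ∑ l, dist (v i) (B l) ^ q * T i l
    + α * ∑ i, ∑ j, ∑ l, ∑ m, |R1 i j - R2 l m| ^ q * (T i l * T j m)

lemma foursum {n k : ℕ} (f g : Fin n → Fin k → ℝ) :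
    ∑ i, ∑ j, ∑ l, ∑ m, f i l * g j m
      = (∑ i, ∑ l, f i l) * (∑ j, ∑ m, g j m) := by
  rw [Finset.sum_mul_sum]
  refine Finset.sum_congr rfl fun i _ => ?_
  refine Finset.sum_congr rfl fun j _ => ?_
  rw [Finset.sum_mul_sum]

/-- Perturbation bound for the srFGW loss: replacing a plan `T` by `T̃` and
re-optimizing the barycenters increases the loss by at most
`((1−α)D_A^q + 2αD_S^q)·∑|T − T̃|`. -/
theorem srFGW_loss_perturbation_bound
    {n k : ℕ} [NeZero n] [NeZero k] {X : Type*} [MetricSpace X]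
    (α q : ℝ) (hα0 : 0 ≤ α) (hα1 : α ≤ 1) (hq : 1 ≤ q)
    (v : Fin n → X) (R1 : Fin n → Fin n → ℝ) (R2 : Fin k → Fin k → ℝ)
    (μ : Fin n → ℝ) (hμ_nonneg : ∀ i, 0 ≤ μ i) (hμ_sum : ∑ i, μ i = 1)
    (T Ttilde : Fin n → Fin k → ℝ)
    (hT_nonneg : ∀ i l, 0 ≤ T i l) (hTt_nonneg : ∀ i l, 0 ≤ Ttilde i l)
    (hT_row : ∀ i, ∑ l, T i l = μ i) (hTt_row : ∀ i, ∑ l, Ttilde i l = μ i)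
    (B Btilde : Fin k → X)
    (hB_opt : srFGWloss α q v R1 R2 Ttilde Btilde ≤ srFGWloss α q v R1 R2 Ttilde B)
    (DA DS : ℝ)
    (hDA : DA = ⨆ p : Fin n × Fin k, dist (v p.1) (B p.2))
    (hDS : DS = ⨆ p : (Fin n × Fin n) × (Fin k × Fin k),
      |R1 p.1.1 p.1.2 - R2 p.2.1 p.2.2|) :
    srFGWloss α q v R1 R2 Ttilde Btilde - srFGWloss α q v R1 R2 T B ≤
      ((1 - α) * DA ^ q + 2 * α * DS ^ q) * ∑ i, ∑ l, |T i l - Ttilde i l| := by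
  have hq0 : (0:ℝ) ≤ q := le_trans zero_le_one hq
  set S := ∑ i, ∑ l, |T i l - Ttilde i l| with hSdef
  have hS0 : 0 ≤ S :=
    Finset.sum_nonneg fun i _ => Finset.sum_nonneg fun l _ => abs_nonneg _
  -- bounds on distances
  have hDA_le : ∀ i l, dist (v i) (B l) ≤ DA := by
    intro i l
    rw [hDA]
    exact le_ciSup (f := fun p : Fin n × Fin k => dist (v p.1) (B p.2))
      (Set.Finite.bddAbove (Set.finite_range _)) ⟨i, l⟩
  have hDS_le : ∀ i j l m, |R1 i j - R2 l m| ≤ DS := by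
    intro i j l m
    rw [hDS]
    exact le_ciSup (f := fun p : (Fin n × Fin n) × (Fin k × Fin k) =>
        |R1 p.1.1 p.1.2 - R2 p.2.1 p.2.2|)
      (Set.Finite.bddAbove (Set.finite_range _)) ⟨⟨i, j⟩, ⟨l, m⟩⟩
  have hdq : ∀ i l, dist (v i) (B l) ^ q ≤ DA ^ q := fun i l =>
    Real.rpow_le_rpow dist_nonneg (hDA_le i l) hq0
  have hcq : ∀ i j l m, |R1 i j - R2 l m| ^ q ≤ DS ^ q := fun i j l m =>
    Real.rpow_le_rpow (abs_nonneg _) (hDS_le i j l m) hq0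
  -- total masses
  have hT_tot : ∑ i, ∑ l, T i l = 1 := by
    simp only [hT_row]; exact hμ_sum
  have hTt_tot : ∑ i, ∑ l, Ttilde i l = 1 := by
    simp only [hTt_row]; exact hμ_sum
  -- attribute term bound
  have h1 : (∑ i, ∑ l, dist (v i) (B l) ^ q * Ttilde i l)
      - (∑ i, ∑ l, dist (v i) (B l) ^ q * T i l) ≤ DA ^ q * S := by
    rw [← Finset.sum_sub_distrib]
    simp only [← Finset.sum_sub_distrib]
    calc ∑ i, ∑ l, (dist (v i) (B l) ^ q * Ttilde i l - dist (v i) (B l) ^ q * T i l)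
        ≤ ∑ i, ∑ l, DA ^ q * |T i l - Ttilde i l| := by
          refine Finset.sum_le_sum fun i _ => Finset.sum_le_sum fun l _ => ?_
          have hd0 : 0 ≤ dist (v i) (B l) ^ q := Real.rpow_nonneg dist_nonneg q
          have habs : Ttilde i l - T i l ≤ |T i l - Ttilde i l| := by
            rw [abs_sub_comm]; exact le_abs_self _
          have h := hdq i l
          nlinarith [abs_nonneg (T i l - Ttilde i l)]
      _ = DA ^ q * S := by rw [hSdef, Finset.mul_sum]; simp [Finset.mul_sum]
  -- structure term bound
  have h2 : (∑ i, ∑ j, ∑ l, ∑ m, |R1 i j - R2 l m| ^ q * (Ttilde i l * Ttilde j m))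
      - (∑ i, ∑ j, ∑ l, ∑ m, |R1 i j - R2 l m| ^ q * (T i l * T j m))
      ≤ 2 * DS ^ q * S := by
    have key : ∀ i j l m,
        |R1 i j - R2 l m| ^ q * (Ttilde i l * Ttilde j m)
          - |R1 i j - R2 l m| ^ q * (T i l * T j m)
        ≤ DS ^ q * (Ttilde i l * |T j m - Ttilde j m|)
          + DS ^ q * (|T i l - Ttilde i l| * T j m) := by
      intro i j l m
      have hc := hcq i j l m
      have hc0 : 0 ≤ |R1 i j - R2 l m| ^ q := Real.rpow_nonneg (abs_nonneg _) q
      have ha := hTt_nonneg i l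
      have hb := hT_nonneg j m
      have e1 : Ttilde j m - T j m ≤ |T j m - Ttilde j m| := by
        rw [abs_sub_comm]; exact le_abs_self _
      have e2 : Ttilde i l - T i l ≤ |T i l - Ttilde i l| := by
        rw [abs_sub_comm]; exact le_abs_self _
      have hx : Ttilde i l * Ttilde j m - T i l * T j m
          ≤ Ttilde i l * |T j m - Ttilde j m| + |T i l - Ttilde i l| * T j m := by
        nlinarith
      have hy : 0 ≤ Ttilde i l * |T j m - Ttilde j m| + |T i l - Ttilde i l| * T j m := by
        positivity
      nlinarith
    calc (∑ i, ∑ j, ∑ l, ∑ m, |R1 i j - R2 l m| ^ q * (Ttilde i l * Ttilde j m))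
          - (∑ i, ∑ j, ∑ l, ∑ m, |R1 i j - R2 l m| ^ q * (T i l * T j m))
        = ∑ i, ∑ j, ∑ l, ∑ m, (|R1 i j - R2 l m| ^ q * (Ttilde i l * Ttilde j m)
            - |R1 i j - R2 l m| ^ q * (T i l * T j m)) := by
          simp only [← Finset.sum_sub_distrib]
      _ ≤ ∑ i, ∑ j, ∑ l, ∑ m, (DS ^ q * (Ttilde i l * |T j m - Ttilde j m|)
            + DS ^ q * (|T i l - Ttilde i l| * T j m)) := by
          refine Finset.sum_le_sum fun i _ => Finset.sum_le_sum fun j _ =>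
            Finset.sum_le_sum fun l _ => Finset.sum_le_sum fun m _ => key i j l m
      _ = DS ^ q * (∑ i, ∑ j, ∑ l, ∑ m, Ttilde i l * |T j m - Ttilde j m|)
            + DS ^ q * (∑ i, ∑ j, ∑ l, ∑ m, |T i l - Ttilde i l| * T j m) := by
          simp only [Finset.sum_add_distrib, Finset.mul_sum]
      _ = 2 * DS ^ q * S := by
          rw [foursum (fun i l => Ttilde i l) (fun j m => |T j m - Ttilde j m|),
            foursum (fun i l => |T i l - Ttilde i l|) (fun j m => T j m)]
          rw [hTt_tot, hT_tot, ← hSdef]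
          ring
  have hmain : srFGWloss α q v R1 R2 Ttilde B - srFGWloss α q v R1 R2 T B ≤
      ((1 - α) * DA ^ q + 2 * α * DS ^ q) * S := by
    unfold srFGWloss
    have g1 := mul_le_mul_of_nonneg_left h1 (by linarith : (0:ℝ) ≤ 1 - α)
    have g2 := mul_le_mul_of_nonneg_left h2 hα0
    nlinarith
  linarith
end

section
/- With T^{soft}, T^{hard} as in the hard-projection construction, the total deviation satisfies ∑_{i,l}|T^{soft}_{il} − T^{hard}_{il}| ≤ 2(1 − 1/k), with equality attained when T^{soft}_{il} = μ_i/k for all i, l. -/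
open Finset

/-- The soft-to-hard deviation is at most `2(1 − 1/k)`, with equality when the
soft plan spreads every row uniformly: `T^soft_{il} = μ_i/k`. -/
theorem soft_to_hard_deviation_bound
    {n k : ℕ} [NeZero k]
    (μ : Fin n → ℝ) (hμ_nonneg : ∀ i, 0 ≤ μ i) (hμ_sum : ∑ i, μ i = 1)
    (Tsoft : Fin n → Fin k → ℝ)
    (hT_nonneg : ∀ i l, 0 ≤ Tsoft i l)
    (hT_row : ∀ i, ∑ l, Tsoft i l = μ i)
    (ℓ : Fin n → Fin k)
    (hℓ : ∀ i, Tsoft i (ℓ i) = univ.sup' univ_nonempty (Tsoft i))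
    (Thard : Fin n → Fin k → ℝ)
    (hThard : ∀ i l, Thard i l = if l = ℓ i then μ i else 0) :
    (∑ i, ∑ l, |Tsoft i l - Thard i l| ≤ 2 * (1 - 1 / (k : ℝ))) ∧
    ((∀ i l, Tsoft i l = μ i / (k : ℝ)) →
      ∑ i, ∑ l, |Tsoft i l - Thard i l| = 2 * (1 - 1 / (k : ℝ))) := by
  have hk : (0 : ℝ) < k := by
    exact_mod_cast Nat.pos_of_ne_zero (NeZero.ne k)
  -- row value
  have hrow : ∀ i, ∑ l, |Tsoft i l - Thard i l| = 2 * (μ i - Tsoft i (ℓ i)) := by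
    intro i
    have hmle : Tsoft i (ℓ i) ≤ μ i := by
      rw [← hT_row i]
      exact Finset.single_le_sum (fun l _ => hT_nonneg i l) (mem_univ _)
    have hsplit := Finset.add_sum_erase univ (fun l => |Tsoft i l - Thard i l|)
      (mem_univ (ℓ i))
    rw [← hsplit]
    have h1 : |Tsoft i (ℓ i) - Thard i (ℓ i)| = μ i - Tsoft i (ℓ i) := by
      rw [hThard, if_pos rfl, abs_sub_comm, abs_of_nonneg (by linarith)]
    have h2 : ∑ l ∈ univ.erase (ℓ i), |Tsoft i l - Thard i l|
        = μ i - Tsoft i (ℓ i) := by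
      have : ∀ l ∈ univ.erase (ℓ i), |Tsoft i l - Thard i l| = Tsoft i l := by
        intro l hl
        rw [hThard, if_neg (Finset.ne_of_mem_erase hl), sub_zero,
          abs_of_nonneg (hT_nonneg i l)]
      rw [Finset.sum_congr rfl this, ← hT_row i,
        ← Finset.add_sum_erase univ (Tsoft i) (mem_univ (ℓ i))]
      ring
    rw [h1, h2]; ring
  -- max at least μ i / k
  have hmax : ∀ i, μ i / k ≤ Tsoft i (ℓ i) := by
    intro i
    rw [div_le_iff₀ hk, mul_comm, ← hT_row i]
    calc ∑ l, Tsoft i l ≤ ∑ _l : Fin k, Tsoft i (ℓ i) := by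
          refine Finset.sum_le_sum fun l _ => ?_
          rw [hℓ i]; exact Finset.le_sup' (Tsoft i) (mem_univ l)
      _ = k * Tsoft i (ℓ i) := by
          rw [Finset.sum_const, card_univ, Fintype.card_fin, nsmul_eq_mul]
  constructor
  · calc ∑ i, ∑ l, |Tsoft i l - Thard i l| = ∑ i, 2 * (μ i - Tsoft i (ℓ i)) := by
          exact Finset.sum_congr rfl fun i _ => hrow i
      _ ≤ ∑ i, 2 * (μ i - μ i / k) := by
          refine Finset.sum_le_sum fun i _ => ?_
          have := hmax i; linarith
      _ = 2 * (1 - 1 / k) := by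
          rw [← Finset.mul_sum]
          have : ∑ i, (μ i - μ i / k) = 1 - 1 / k := by
            rw [Finset.sum_sub_distrib, hμ_sum, ← Finset.sum_div, hμ_sum]
          rw [this]
  · intro huni
    have : ∀ i, ∑ l, |Tsoft i l - Thard i l| = 2 * (μ i - μ i / k) := by
      intro i; rw [hrow i, huni i (ℓ i)]
    calc ∑ i, ∑ l, |Tsoft i l - Thard i l| = ∑ i, 2 * (μ i - μ i / k) :=
          Finset.sum_congr rfl fun i _ => this i
      _ = 2 * (1 - 1 / k) := by
          rw [← Finset.mul_sum, Finset.sum_sub_distrib, hμ_sum, ← Finset.sum_div, hμ_sum]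
end

section
/- For α = 0 and q = 2, the semi-relaxed Fused Gromov–Wasserstein objective reduces to the Fréchet k-means / Wasserstein projection problem on attributes: srFGW_{2,0}(R¹, μ¹, R², A, d_A) = min over T with T𝟙_k = μ¹ and B ∈ X^k of ∑_{i=1}^n ∑_{l=1}^k d_A(v_i, b_l)² T_{il}, and this equals min_{ν ∈ P_k(X)} W_2²(μ_A, ν), where μ_A is the empirical attribute distribution ∑_i μ_i δ_{v_i} and P_k(X) is the set of probability measures on X supported on at most k points. -/
open Finset

/-- Squared 2-Wasserstein distance between the empirical attribute
distribution `∑ μ_i δ_{v_i}` and a discrete measure with atoms `b` and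
weights `w`, computed over couplings. -/
noncomputable def W2sq {n k : ℕ} {X : Type*} [MetricSpace X]
    (μ : Fin n → ℝ) (v : Fin n → X) (b : Fin k → X) (w : Fin k → ℝ) : ℝ :=
  sInf {c : ℝ | ∃ T : Fin n → Fin k → ℝ,
    (∀ i l, 0 ≤ T i l) ∧ (∀ i, ∑ l, T i l = μ i) ∧ (∀ l, ∑ i, T i l = w l) ∧
    c = ∑ i, ∑ l, dist (v i) (b l) ^ 2 * T i l}

/-- For `α = 0`, `q = 2`, the semi-relaxed FGW objective reduces to the
Fréchet k-means / Wasserstein projection problem on the attributes: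
it equals `min_{ν ∈ P_k(X)} W_2²(μ_A, ν)`. -/
theorem srFGW_alpha_zero_eq_frechet_kmeans
    {n k : ℕ} {X : Type*} [MetricSpace X] [Nonempty X]
    (v : Fin n → X)
    (R1 : Fin n → Fin n → ℝ) (R2 : Fin k → Fin k → ℝ)
    (μ1 : Fin n → ℝ) (hμ1_nonneg : ∀ i, 0 ≤ μ1 i) (hμ1_sum : ∑ i, μ1 i = 1) :
    sInf {c : ℝ | ∃ (T : Fin n → Fin k → ℝ) (B : Fin k → X),
        (∀ i l, 0 ≤ T i l) ∧ (∀ i, ∑ l, T i l = μ1 i) ∧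
        c = ∑ i, ∑ j, ∑ l, ∑ m,
          ((1 - (0:ℝ)) * dist (v i) (B l) ^ 2 + 0 * |R1 i j - R2 l m| ^ 2)
            * (T i l * T j m)}
      =
    sInf {c : ℝ | ∃ (T : Fin n → Fin k → ℝ) (B : Fin k → X),
        (∀ i l, 0 ≤ T i l) ∧ (∀ i, ∑ l, T i l = μ1 i) ∧
        c = ∑ i, ∑ l, dist (v i) (B l) ^ 2 * T i l}
    ∧
    sInf {c : ℝ | ∃ (T : Fin n → Fin k → ℝ) (B : Fin k → X),
        (∀ i l, 0 ≤ T i l) ∧ (∀ i, ∑ l, T i l = μ1 i) ∧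
        c = ∑ i, ∑ l, dist (v i) (B l) ^ 2 * T i l}
      =
    sInf {c : ℝ | ∃ (b : Fin k → X) (w : Fin k → ℝ),
        (∀ l, 0 ≤ w l) ∧ (∑ l, w l = 1) ∧
        c = W2sq μ1 v b w} := by
  -- Key computation: the quadratic objective collapses to the linear one.
  have key : ∀ (T : Fin n → Fin k → ℝ) (B : Fin k → X),
      (∀ i, ∑ l, T i l = μ1 i) →
      (∑ i, ∑ j, ∑ l, ∑ m,
        ((1 - (0:ℝ)) * dist (v i) (B l) ^ 2 + 0 * |R1 i j - R2 l m| ^ 2)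
          * (T i l * T j m))
      = ∑ i, ∑ l, dist (v i) (B l) ^ 2 * T i l := by
    intro T B hT
    have hTT : (∑ j, ∑ m, T j m) = 1 := by
      rw [show (∑ j, ∑ m, T j m) = ∑ j, μ1 j from Finset.sum_congr rfl fun j _ => hT j,
        hμ1_sum]
    refine Finset.sum_congr rfl fun i _ => ?_
    calc ∑ j, ∑ l, ∑ m,
          ((1 - (0:ℝ)) * dist (v i) (B l) ^ 2 + 0 * |R1 i j - R2 l m| ^ 2)
            * (T i l * T j m)
        = (∑ l, dist (v i) (B l) ^ 2 * T i l) * (∑ j, ∑ m, T j m) := by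
          rw [Finset.sum_comm, Finset.sum_mul]
          refine Finset.sum_congr rfl fun l _ => ?_
          rw [Finset.mul_sum]
          refine Finset.sum_congr rfl fun j _ => ?_
          rw [Finset.mul_sum]
          refine Finset.sum_congr rfl fun m _ => ?_
          ring
      _ = ∑ l, dist (v i) (B l) ^ 2 * T i l := by rw [hTT, mul_one]
  constructor
  · congr 1
    ext c
    constructor
    · rintro ⟨T, B, h0, h1, rfl⟩
      exact ⟨T, B, h0, h1, key T B h1⟩
    · rintro ⟨T, B, h0, h1, rfl⟩
      exact ⟨T, B, h0, h1, (key T B h1).symm⟩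
  · -- second equality
    set S : Set ℝ := {c : ℝ | ∃ (T : Fin n → Fin k → ℝ) (B : Fin k → X),
        (∀ i l, 0 ≤ T i l) ∧ (∀ i, ∑ l, T i l = μ1 i) ∧
        c = ∑ i, ∑ l, dist (v i) (B l) ^ 2 * T i l} with hS
    set S2 : Set ℝ := {c : ℝ | ∃ (b : Fin k → X) (w : Fin k → ℝ),
        (∀ l, 0 ≤ w l) ∧ (∑ l, w l = 1) ∧ c = W2sq μ1 v b w} with hS2
    have hSnn : ∀ c ∈ S, (0:ℝ) ≤ c := by
      rintro c ⟨T, B, h0, h1, rfl⟩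
      exact Finset.sum_nonneg fun i _ => Finset.sum_nonneg fun l _ =>
        mul_nonneg (by positivity) (h0 i l)
    have hSbdd : BddBelow S := ⟨0, fun c hc => hSnn c hc⟩
    rcases Nat.eq_zero_or_pos k with hk | hk
    · -- both sets are empty
      subst hk
      have hSe : S = ∅ := by
        ext c; simp only [hS, Set.mem_setOf_eq, Set.mem_empty_iff_false, iff_false]
        rintro ⟨T, B, h0, h1, rfl⟩
        have h2 : ∑ i, μ1 i = 0 := by simp [← h1]
        rw [hμ1_sum] at h2; norm_num at h2
      have hS2e : S2 = ∅ := by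
        ext c; simp only [hS2, Set.mem_setOf_eq, Set.mem_empty_iff_false, iff_false]
        rintro ⟨b, w, hw0, hw1, rfl⟩
        simp at hw1
      rw [hSe, hS2e]
    · obtain ⟨x0⟩ := ‹Nonempty X›
      -- a coupling with prescribed marginals exists (product coupling)
      have prod_mem : ∀ (b : Fin k → X) (w : Fin k → ℝ), (∀ l, 0 ≤ w l) →
          (∑ l, w l = 1) →
          (∑ i, ∑ l, dist (v i) (b l) ^ 2 * (μ1 i * w l)) ∈
            {c : ℝ | ∃ T : Fin n → Fin k → ℝ,
              (∀ i l, 0 ≤ T i l) ∧ (∀ i, ∑ l, T i l = μ1 i) ∧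
              (∀ l, ∑ i, T i l = w l) ∧
              c = ∑ i, ∑ l, dist (v i) (b l) ^ 2 * T i l} := by
        intro b w hw0 hw1
        refine ⟨fun i l => μ1 i * w l, fun i l => mul_nonneg (hμ1_nonneg i) (hw0 l),
          fun i => by rw [← Finset.mul_sum, hw1, mul_one],
          fun l => by rw [← Finset.sum_mul, hμ1_sum, one_mul], rfl⟩
      have hW3nn : ∀ (b : Fin k → X) (w : Fin k → ℝ),
          ∀ c ∈ {c : ℝ | ∃ T : Fin n → Fin k → ℝ,
              (∀ i l, 0 ≤ T i l) ∧ (∀ i, ∑ l, T i l = μ1 i) ∧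
              (∀ l, ∑ i, T i l = w l) ∧
              c = ∑ i, ∑ l, dist (v i) (b l) ^ 2 * T i l}, (0:ℝ) ≤ c := by
        rintro b w c ⟨T, h0, h1, h2, rfl⟩
        exact Finset.sum_nonneg fun i _ => Finset.sum_nonneg fun l _ =>
          mul_nonneg (by positivity) (h0 i l)
      -- nonemptiness of S and S2
      have w0 : Fin k → ℝ := fun l => if l = ⟨0, hk⟩ then 1 else 0
      have hSne : S.Nonempty := by
        refine ⟨∑ i, ∑ l, dist (v i) ((fun _ => x0) l) ^ 2 *
          (μ1 i * (if l = (⟨0, hk⟩ : Fin k) then (1:ℝ) else 0)),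
          fun i l => μ1 i * (if l = ⟨0, hk⟩ then 1 else 0), fun _ => x0,
          fun i l => mul_nonneg (hμ1_nonneg i) (by positivity), fun i => ?_, rfl⟩
        rw [← Finset.mul_sum]
        simp
      have hS2ne : S2.Nonempty :=
        ⟨W2sq μ1 v (fun _ => x0) (fun l => if l = ⟨0, hk⟩ then 1 else 0),
          fun _ => x0, fun l => if l = ⟨0, hk⟩ then 1 else 0,
          fun l => by positivity, by simp, rfl⟩
      apply le_antisymm
      · -- sInf S ≤ sInf S2, flipped: goal is sInf S2 ≤ sInf S? check order
        -- goal: sInf S = sInf S2, le_antisymm gives sInf S ≤ sInf S2 first? no: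
        -- goal after set: sInf S = sInf S2; first subgoal sInf S ≤ sInf S2
        refine le_csInf hS2ne ?_
        rintro c ⟨b, w, hw0, hw1, rfl⟩
        refine le_trans (csInf_le_csInf hSbdd ⟨_, prod_mem b w hw0 hw1⟩ ?_) le_rfl
        rintro c ⟨T, h0, h1, h2, rfl⟩
        exact ⟨T, b, h0, h1, rfl⟩
      · refine le_csInf hSne ?_
        rintro c ⟨T, B, h0, h1, rfl⟩
        have hw0 : ∀ l, 0 ≤ ∑ i, T i l :=
          fun l => Finset.sum_nonneg fun i _ => h0 i l
        have hw1 : ∑ l, ∑ i, T i l = 1 := by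
          rw [Finset.sum_comm]
          rw [show (∑ i, ∑ l, T i l) = ∑ i, μ1 i from
            Finset.sum_congr rfl fun i _ => h1 i, hμ1_sum]
        have hmem : W2sq μ1 v B (fun l => ∑ i, T i l) ∈ S2 :=
          ⟨B, fun l => ∑ i, T i l, hw0, hw1, rfl⟩
        refine le_trans (csInf_le ⟨0, fun c hc => ?_⟩ hmem) ?_
        · rcases hc with ⟨b, w, hwa, hwb, rfl⟩
          exact Real.sInf_nonneg (hW3nn b w)
        · exact csInf_le ⟨0, hW3nn B (fun l => ∑ i, T i l)⟩
            ⟨T, h0, h1, fun l => rfl, rfl⟩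
end
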